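/- A separable diagonal point set admits a planar bus realization if and only if it admits a planar bus realization in which every bus is a center-bus. -/

import Mathlib

open Set

/-- A colored point set: a finite set of points `P` with coordinates `x p`, `y p`
and colors `f p` in a finite color set `C`; the color map is surjective and no
two points share an x-coordinate or a y-coordinate. -/
structure CPS (P C : Type) [Fintype P] [Fintype C] where
  x : P → ℝ
  y : P → ℝ
  f : P → C
  f_surj : Function.Surjective f
  x_inj : Function.Injective x
  y_inj : Function.Injective y

variable {P C : Type} [Fintype P] [Fintype C]

/-- Left end `x_l(c)` of the span of color `c`. -/
noncomputable def xl (S : CPS P C) (c : C) : ℝ :=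
  sInf (S.x '' {p | S.f p = c})

/-- Right end `x_r(c)` of the span of color `c`. -/
noncomputable def xr (S : CPS P C) (c : C) : ℝ :=
  sSup (S.x '' {p | S.f p = c})

/-- The bus of color `c`: the horizontal segment at height `Y c` over the span of `c`. -/
def busSeg (S : CPS P C) (Y : C → ℝ) (c : C) : Set (ℝ × ℝ) :=
  {q | q.2 = Y c ∧ q.1 ∈ Icc (xl S c) (xr S c)}

/-- The connection segment of point `p`: the vertical segment from `p` to its bus. -/
def connSeg (S : CPS P C) (Y : C → ℝ) (p : P) : Set (ℝ × ℝ) :=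
  {q | q.1 = S.x p ∧ q.2 ∈ uIcc (S.y p) (Y (S.f p))}

/-- Planarity of a bus realization `Y`: no bus contains a point of a different
color, no bus intersects the connection segment of a point of a different color,
and no two connection segments of points of different colors intersect. -/
def PlanarBus (S : CPS P C) (Y : C → ℝ) : Prop :=
  (∀ (c : C) (p : P), S.f p ≠ c → (S.x p, S.y p) ∉ busSeg S Y c) ∧
  (∀ (c : C) (p : P), S.f p ≠ c → Disjoint (busSeg S Y c) (connSeg S Y p)) ∧
  (∀ p q : P, S.f p ≠ S.f q → Disjoint (connSeg S Y p) (connSeg S Y q))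

/-- A center-bus: the bus height is strictly between the minimum and maximum
y-coordinates of its points. -/
noncomputable def isCenterBus (S : CPS P C) (Y : C → ℝ) (c : C) : Prop :=
  sInf (S.y '' {p | S.f p = c}) < Y c ∧ Y c < sSup (S.y '' {p | S.f p = c})

section Aux

/-- Key arithmetic lemma: from the planarity constraints on a pair of colors
(left endpoints `l < l'`, right endpoints `r, r'`), the clamped integer zones
satisfy the combinatorial zone constraints. -/
lemma keyZ (l l' r r' : ℤ) (Ya Yb : ℝ)
    (hll' : l < l') (hl'r : l' < r) (hl'r' : l' < r')
    (h1 : Ya ∉ uIcc ((l' : ℤ) : ℝ) Yb)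
    (h2 : r' < r → Ya ∉ uIcc ((r' : ℤ) : ℝ) Yb)
    (h3 : r < r' → Yb ∉ uIcc ((r : ℤ) : ℝ) Ya) :
    (r' < r → (max l (min ⌊Ya⌋ (r - 1)) < l' ∨ r' ≤ max l (min ⌊Ya⌋ (r - 1)))) ∧
    (r < r' → (max l' (min ⌊Yb⌋ (r' - 1)) ≤ max l (min ⌊Ya⌋ (r - 1)) ∨
      (max l (min ⌊Ya⌋ (r - 1)) < l' ∧ r ≤ max l' (min ⌊Yb⌋ (r' - 1))))) := by
  rw [mem_uIcc] at h1
  push_neg at h1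
  obtain ⟨h1a, h1b⟩ := h1
  constructor
  · intro hrr
    have h2' := h2 hrr
    rw [mem_uIcc] at h2'
    push_neg at h2'
    obtain ⟨h2a, h2b⟩ := h2'
    rcases lt_or_ge Ya ((l' : ℤ) : ℝ) with h | h
    · have hfl : ⌊Ya⌋ < l' := Int.floor_lt.mpr h
      left; omega
    · have hba : Yb < Ya := h1a h
      have hra : ((r' : ℤ) : ℝ) < Ya := h2b hba.le
      have hfl : r' ≤ ⌊Ya⌋ := Int.le_floor.mpr hra.le
      right; omega
  · intro hrr
    have h3' := h3 hrr
    rw [mem_uIcc] at h3'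
    push_neg at h3'
    obtain ⟨h3a, h3b⟩ := h3'
    rcases le_or_gt Ya Yb with h | h
    · have hrb : ((r : ℤ) : ℝ) < Yb := h3b h
      have hal' : Ya < ((l' : ℤ) : ℝ) := by
        by_contra hc
        push_neg at hc
        exact absurd (h1a hc) (not_lt.mpr h)
      have hga : ⌊Ya⌋ < l' := Int.floor_lt.mpr hal'
      have hgb : r ≤ ⌊Yb⌋ := Int.le_floor.mpr hrb.le
      right; omega
    · have hbr : Yb < ((r : ℤ) : ℝ) := by
        by_contra hc
        push_neg at hc
        exact absurd (h3a hc) (not_lt.mpr h.le)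
      have hl'a : ((l' : ℤ) : ℝ) < Ya := h1b h.le
      have hA : l' ≤ ⌊Ya⌋ := Int.le_floor.mpr hl'a.le
      have hB : ⌊Yb⌋ ≤ ⌊Ya⌋ := Int.floor_le_floor h.le
      have hC : ⌊Yb⌋ < r := Int.floor_lt.mpr hbr
      left; omega

/-- From the zone constraints, the recentered heights satisfy the planarity
constraints for the pair. -/
lemma pairReal (l l' r r' za zb : ℤ) (fa fb : ℝ)
    (hza1 : l ≤ za) (hza2 : za ≤ r - 1) (hzb1 : l' ≤ zb) (hzb2 : zb ≤ r' - 1)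
    (hfa0 : 0 < fa) (hfa1 : fa < 1) (hfb0 : 0 < fb) (hfb1 : fb < 1) (hfab : fb < fa)
    (hl'r : l' < r) (hl'r' : l' < r') (hrr : r ≠ r')
    (hN : r' < r → (za < l' ∨ r' ≤ za))
    (hX : r < r' → (zb ≤ za ∨ (za < l' ∧ r ≤ zb))) :
    ((za : ℝ) + fa ∉ uIcc ((l' : ℤ) : ℝ) ((zb : ℝ) + fb)) ∧
    (r' < r → (za : ℝ) + fa ∉ uIcc ((r' : ℤ) : ℝ) ((zb : ℝ) + fb)) ∧
    (r < r' → (zb : ℝ) + fb ∉ uIcc ((r : ℤ) : ℝ) ((za : ℝ) + fa)) := by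
  have hcast : ∀ m n : ℤ, m ≤ n → (m : ℝ) ≤ (n : ℝ) := fun m n h => by exact_mod_cast h
  have hcast' : ∀ m n : ℤ, m < n → (m : ℝ) + 1 ≤ (n : ℝ) := fun m n h => by exact_mod_cast h
  refine ⟨?_, ?_, ?_⟩
  · -- C1
    intro hmem
    rw [mem_uIcc] at hmem
    rcases lt_or_gt_of_ne hrr with hlt | hgt
    · -- r < r', crossing
      rcases hX hlt with hc | ⟨hc1, hc2⟩
      · have h1 : (zb : ℝ) ≤ (za : ℝ) := hcast _ _ hc
        have h2 : ((l' : ℤ) : ℝ) ≤ (zb : ℝ) := hcast _ _ hzb1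
        rcases hmem with ⟨hA, hB⟩ | ⟨hA, hB⟩ <;> linarith
      · have h1 : (za : ℝ) + 1 ≤ ((l' : ℤ) : ℝ) := hcast' _ _ hc1
        have h2 : ((r : ℤ) : ℝ) ≤ (zb : ℝ) := hcast _ _ hc2
        have h3 : ((l' : ℤ) : ℝ) + 1 ≤ ((r : ℤ) : ℝ) := hcast' _ _ hl'r
        rcases hmem with ⟨hA, hB⟩ | ⟨hA, hB⟩ <;> linarith
    · -- r' < r, nested
      rcases hN hgt with hc | hc
      · have h1 : (za : ℝ) + 1 ≤ ((l' : ℤ) : ℝ) := hcast' _ _ hc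
        have h2 : ((l' : ℤ) : ℝ) ≤ (zb : ℝ) := hcast _ _ hzb1
        rcases hmem with ⟨hA, hB⟩ | ⟨hA, hB⟩ <;> linarith
      · have h1 : ((r' : ℤ) : ℝ) ≤ (za : ℝ) := hcast _ _ hc
        have h2 : (zb : ℝ) ≤ ((r' : ℤ) : ℝ) - 1 := by
          have := hcast _ _ hzb2; push_cast at this ⊢; linarith
        have h3 : ((l' : ℤ) : ℝ) + 1 ≤ ((r' : ℤ) : ℝ) := hcast' _ _ hl'r'
        rcases hmem with ⟨hA, hB⟩ | ⟨hA, hB⟩ <;> linarith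
  · -- C2 (nested)
    intro hgt hmem
    rw [mem_uIcc] at hmem
    rcases hN hgt with hc | hc
    · have h1 : (za : ℝ) + 1 ≤ ((l' : ℤ) : ℝ) := hcast' _ _ hc
      have h2 : ((l' : ℤ) : ℝ) ≤ (zb : ℝ) := hcast _ _ hzb1
      have h3 : ((l' : ℤ) : ℝ) + 1 ≤ ((r' : ℤ) : ℝ) := hcast' _ _ hl'r'
      rcases hmem with ⟨hA, hB⟩ | ⟨hA, hB⟩ <;> linarith
    · have h1 : ((r' : ℤ) : ℝ) ≤ (za : ℝ) := hcast _ _ hc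
      have h2 : (zb : ℝ) ≤ ((r' : ℤ) : ℝ) - 1 := by
        have := hcast _ _ hzb2; push_cast at this ⊢; linarith
      rcases hmem with ⟨hA, hB⟩ | ⟨hA, hB⟩ <;> linarith
  · -- C3 (crossing)
    intro hlt hmem
    rw [mem_uIcc] at hmem
    rcases hX hlt with hc | ⟨hc1, hc2⟩
    · have h1 : (zb : ℝ) ≤ (za : ℝ) := hcast _ _ hc
      have h2 : (za : ℝ) ≤ ((r : ℤ) : ℝ) - 1 := by
        have := hcast _ _ hza2; push_cast at this ⊢; linarith
      have h3 : (zb : ℝ) ≤ ((r : ℤ) : ℝ) - 1 := by linarith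
      rcases hmem with ⟨hA, hB⟩ | ⟨hA, hB⟩
      · linarith
      · -- Ya* ≤ Yb* and zb ≤ za: forces za = zb, then fb < fa contradiction
        have h4 : (za : ℝ) ≤ (zb : ℝ) + 1 - fa + fb - fb := by linarith
        -- za ≤ zb would give za = zb
        rcases lt_or_ge zb za with h5 | h5
        · have := hcast' _ _ h5; linarith
        · have h6 : (za : ℝ) ≤ (zb : ℝ) := hcast _ _ h5
          have h7 : (za : ℝ) = (zb : ℝ) := le_antisymm h6 h1
          linarith
    · have h1 : (za : ℝ) + 1 ≤ ((l' : ℤ) : ℝ) := hcast' _ _ hc1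
      have h2 : ((r : ℤ) : ℝ) ≤ (zb : ℝ) := hcast _ _ hc2
      have h3 : ((l' : ℤ) : ℝ) + 1 ≤ ((r : ℤ) : ℝ) := hcast' _ _ hl'r
      rcases hmem with ⟨hA, hB⟩ | ⟨hA, hB⟩ <;> linarith

end Aux

/-- a separable diagonal point set admits a planar bus realization
iff it admits a planar bus realization in which every bus is a center-bus. -/
theorem stmt15 {k : ℕ} {C : Type} [Fintype C] (S : CPS (Fin (2 * k)) C)
    (hx : ∀ i : Fin (2 * k), S.x i = ((i : ℕ) : ℝ) + 1)
    (hy : ∀ i : Fin (2 * k), S.y i = ((i : ℕ) : ℝ) + 1)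
    (hsep : ∀ c : C, ∃ i j : Fin (2 * k), (i : ℕ) < k ∧ k ≤ (j : ℕ) ∧
      S.f i = c ∧ S.f j = c ∧ ∀ l : Fin (2 * k), S.f l = c → l = i ∨ l = j) :
    (∃ Y : C → ℝ, Function.Injective Y ∧ PlanarBus S Y) ↔
      (∃ Y : C → ℝ, Function.Injective Y ∧ PlanarBus S Y ∧
        ∀ c : C, isCenterBus S Y c) := by
  constructor
  swap
  · rintro ⟨Y, h1, h2, -⟩
    exact ⟨Y, h1, h2⟩
  rintro ⟨Y, -, hP⟩
  choose I J hIk hkJ hfI hfJ huniq using hsep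
  -- basic injectivity facts
  have hainj : ∀ c c' : C, (I c : ℕ) = (I c' : ℕ) → c = c' := by
    intro c c' h
    have h2 : I c = I c' := Fin.ext h
    rw [← hfI c, h2, hfI c']
  have hbinj : ∀ c c' : C, (J c : ℕ) = (J c' : ℕ) → c = c' := by
    intro c c' h
    have h2 : J c = J c' := Fin.ext h
    rw [← hfJ c, h2, hfJ c']
  -- fibers are pairs
  have hfib : ∀ c : C, {p : Fin (2 * k) | S.f p = c} = {I c, J c} := by
    intro c
    ext p
    simp only [mem_setOf_eq, mem_insert_iff, mem_singleton_iff]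
    constructor
    · exact huniq c p
    · rintro (rfl | rfl)
      · exact hfI c
      · exact hfJ c
  have hIJle : ∀ c c' : C, ((I c : ℕ) : ℝ) + 1 ≤ ((J c' : ℕ) : ℝ) + 1 := by
    intro c c'
    have h1 : (I c : ℕ) < k := hIk c
    have h2 : k ≤ (J c' : ℕ) := hkJ c'
    have : ((I c : ℕ) : ℝ) ≤ ((J c' : ℕ) : ℝ) := by
      exact_mod_cast le_trans h1.le h2
    linarith
  -- span computations
  have hxl : ∀ c : C, xl S c = ((I c : ℕ) : ℝ) + 1 := by
    intro c
    rw [xl, hfib c, Set.image_pair, csInf_pair,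
      min_eq_left (by rw [hx, hx]; exact hIJle c c), hx]
  have hxr : ∀ c : C, xr S c = ((J c : ℕ) : ℝ) + 1 := by
    intro c
    rw [xr, hfib c, Set.image_pair, csSup_pair,
      max_eq_right (by rw [hx, hx]; exact hIJle c c), hx]
  have hyinf : ∀ c : C, sInf (S.y '' {p | S.f p = c}) = ((I c : ℕ) : ℝ) + 1 := by
    intro c
    rw [hfib c, Set.image_pair, csInf_pair,
      min_eq_left (by rw [hy, hy]; exact hIJle c c), hy]
  have hysup : ∀ c : C, sSup (S.y '' {p | S.f p = c}) = ((J c : ℕ) : ℝ) + 1 := by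
    intro c
    rw [hfib c, Set.image_pair, csSup_pair,
      max_eq_right (by rw [hy, hy]; exact hIJle c c), hy]
  -- planarity extraction for the given Y
  have hext : ∀ (c : C) (p : Fin (2 * k)), S.f p ≠ c →
      ((I c : ℕ) : ℝ) + 1 ≤ S.x p → S.x p ≤ ((J c : ℕ) : ℝ) + 1 →
      Y c ∉ uIcc (S.y p) (Y (S.f p)) := by
    intro c p hne h1 h2 hmem
    have hb : ((S.x p, Y c) : ℝ × ℝ) ∈ busSeg S Y c := by
      refine ⟨rfl, ?_⟩
      rw [hxl c, hxr c]
      exact ⟨h1, h2⟩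
    have hc : ((S.x p, Y c) : ℝ × ℝ) ∈ connSeg S Y p := ⟨rfl, hmem⟩
    exact Set.disjoint_left.mp (hP.2.1 c p hne) hb hc
  -- definitions of the recentered realization
  set zf : C → ℤ := fun c => max (((I c : ℕ) : ℤ) + 1) (min ⌊Y c⌋ ((J c : ℕ) : ℤ)) with hzfdef
  set fr : C → ℝ := fun c => ((k : ℝ) - ((I c : ℕ) : ℝ)) / ((k : ℝ) + 2) with hfrdef
  set Y2 : C → ℝ := fun c => ((zf c : ℤ) : ℝ) + fr c with hY2def
  have hk2 : (0 : ℝ) < (k : ℝ) + 2 := by positivity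
  have hfr0 : ∀ c, 0 < fr c := by
    intro c
    apply div_pos _ hk2
    have : ((I c : ℕ) : ℝ) < (k : ℝ) := by exact_mod_cast hIk c
    linarith
  have hfr1 : ∀ c, fr c < 1 := by
    intro c
    simp only [hfrdef]
    rw [div_lt_one hk2]
    have : (0 : ℝ) ≤ ((I c : ℕ) : ℝ) := by positivity
    linarith
  have hfrmono : ∀ c c' : C, (I c : ℕ) < (I c' : ℕ) → fr c' < fr c := by
    intro c c' h
    have h1 : ((I c : ℕ) : ℝ) < ((I c' : ℕ) : ℝ) := by exact_mod_cast h
    simp only [hfrdef]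
    exact div_lt_div_of_pos_right (by linarith) hk2
  have hzf1 : ∀ c, ((I c : ℕ) : ℤ) + 1 ≤ zf c := fun c => le_max_left _ _
  have hzf2 : ∀ c, zf c ≤ ((J c : ℕ) : ℤ) := by
    intro c
    apply max_le _ (min_le_right _ _)
    have h1 : (I c : ℕ) < k := hIk c
    have h2 : k ≤ (J c : ℕ) := hkJ c
    omega
  have hY2lb : ∀ c, ((I c : ℕ) : ℝ) + 1 < Y2 c := by
    intro c
    have h1 : (((I c : ℕ) : ℤ) + 1 : ℝ) ≤ ((zf c : ℤ) : ℝ) := by exact_mod_cast hzf1 c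
    have h2 := hfr0 c
    simp only [hY2def]
    push_cast at h1 ⊢
    linarith
  have hY2ub : ∀ c, Y2 c < ((J c : ℕ) : ℝ) + 1 := by
    intro c
    have h1 : ((zf c : ℤ) : ℝ) ≤ (((J c : ℕ) : ℤ) : ℝ) := by exact_mod_cast hzf2 c
    have h2 := hfr1 c
    simp only [hY2def]
    push_cast at h1 ⊢
    linarith
  -- the main pair lemma
  have hmain : ∀ c c' : C, (I c : ℕ) < (I c' : ℕ) →
      (Y2 c ∉ uIcc (((I c' : ℕ) : ℝ) + 1) (Y2 c')) ∧
      ((J c' : ℕ) < (J c : ℕ) → Y2 c ∉ uIcc (((J c' : ℕ) : ℝ) + 1) (Y2 c')) ∧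
      ((J c : ℕ) < (J c' : ℕ) → Y2 c' ∉ uIcc (((J c : ℕ) : ℝ) + 1) (Y2 c)) := by
    intro c c' hlt
    have hne : c' ≠ c := fun h => by subst h; exact lt_irrefl _ hlt
    have hbne : (J c : ℕ) ≠ (J c' : ℕ) := fun h => hne (hbinj c' c h.symm)
    have hcA : ∀ d : C, ((((I d : ℕ) : ℤ) + 1 : ℤ) : ℝ) = ((I d : ℕ) : ℝ) + 1 := by
      intro d; push_cast; ring
    have hcB : ∀ d : C, ((((J d : ℕ) : ℤ) + 1 : ℤ) : ℝ) = ((J d : ℕ) : ℝ) + 1 := by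
      intro d; push_cast; ring
    -- hypotheses for keyZ
    have h1 : Y c ∉ uIcc ((((I c' : ℕ) : ℤ) + 1 : ℤ) : ℝ) (Y c') := by
      rw [hcA]
      have h := hext c (I c') (by rw [hfI]; exact hne)
        (by rw [hx]
            have : ((I c : ℕ) : ℝ) ≤ ((I c' : ℕ) : ℝ) := by exact_mod_cast hlt.le
            linarith)
        (by rw [hx]; exact hIJle c' c)
      rw [hy, hfI] at h
      exact h
    have h2 : (((J c' : ℕ) : ℤ) + 1) < (((J c : ℕ) : ℤ) + 1) →
        Y c ∉ uIcc ((((J c' : ℕ) : ℤ) + 1 : ℤ) : ℝ) (Y c') := by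
      intro hgt
      rw [hcB]
      have hgt' : (J c' : ℕ) < (J c : ℕ) := by omega
      have h := hext c (J c') (by rw [hfJ]; exact hne)
        (by rw [hx]; exact hIJle c c')
        (by rw [hx]
            have : ((J c' : ℕ) : ℝ) ≤ ((J c : ℕ) : ℝ) := by exact_mod_cast hgt'.le
            linarith)
      rw [hy, hfJ] at h
      exact h
    have h3 : (((J c : ℕ) : ℤ) + 1) < (((J c' : ℕ) : ℤ) + 1) →
        Y c' ∉ uIcc ((((J c : ℕ) : ℤ) + 1 : ℤ) : ℝ) (Y c) := by
      intro hgt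
      rw [hcB]
      have hgt' : (J c : ℕ) < (J c' : ℕ) := by omega
      have h := hext c' (J c) (by rw [hfJ]; exact hne.symm)
        (by rw [hx]; exact hIJle c' c)
        (by rw [hx]
            have : ((J c : ℕ) : ℝ) ≤ ((J c' : ℕ) : ℝ) := by exact_mod_cast hgt'.le
            linarith)
      rw [hy, hfJ] at h
      exact h
    have hil : ((I c : ℕ) : ℤ) + 1 < ((I c' : ℕ) : ℤ) + 1 := by omega
    have hl'r : ((I c' : ℕ) : ℤ) + 1 < ((J c : ℕ) : ℤ) + 1 := by
      have h1 := hIk c'; have h2 := hkJ c; omega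
    have hl'r' : ((I c' : ℕ) : ℤ) + 1 < ((J c' : ℕ) : ℤ) + 1 := by
      have h1 := hIk c'; have h2 := hkJ c'; omega
    obtain ⟨hN, hX⟩ := keyZ (((I c : ℕ) : ℤ) + 1) (((I c' : ℕ) : ℤ) + 1)
      (((J c : ℕ) : ℤ) + 1) (((J c' : ℕ) : ℤ) + 1) (Y c) (Y c') hil hl'r hl'r' h1 h2 h3
    have hNz : (((J c' : ℕ) : ℤ) + 1) < (((J c : ℕ) : ℤ) + 1) →
        (zf c < ((I c' : ℕ) : ℤ) + 1 ∨ ((J c' : ℕ) : ℤ) + 1 ≤ zf c) := by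
      intro h
      have h2 := hN h
      simp only [hzfdef]
      omega
    have hXz : (((J c : ℕ) : ℤ) + 1) < (((J c' : ℕ) : ℤ) + 1) →
        (zf c' ≤ zf c ∨ (zf c < ((I c' : ℕ) : ℤ) + 1 ∧ ((J c : ℕ) : ℤ) + 1 ≤ zf c')) := by
      intro h
      have h2 := hX h
      simp only [hzfdef]
      omega
    obtain ⟨C1, C2, C3⟩ := pairReal (((I c : ℕ) : ℤ) + 1) (((I c' : ℕ) : ℤ) + 1)
      (((J c : ℕ) : ℤ) + 1) (((J c' : ℕ) : ℤ) + 1) (zf c) (zf c') (fr c) (fr c')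
      (hzf1 c) (by have := hzf2 c; omega) (hzf1 c') (by have := hzf2 c'; omega)
      (hfr0 c) (hfr1 c) (hfr0 c') (hfr1 c') (hfrmono c c' hlt)
      hl'r hl'r' (by omega) hNz hXz
    refine ⟨by rw [← hcA c']; exact C1, fun h => ?_, fun h => ?_⟩
    · rw [← hcB c']
      exact C2 (by omega)
    · rw [← hcB c]
      exact C3 (by omega)
  -- clause 2 : bus-connection disjointness
  have hcl2 : ∀ (c : C) (p : Fin (2 * k)), S.f p ≠ c →
      Disjoint (busSeg S Y2 c) (connSeg S Y2 p) := by
    intro c p hne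
    rw [Set.disjoint_left]
    rintro q ⟨hq2, hq1⟩ ⟨hqx, hqy⟩
    rw [hxl c, hxr c] at hq1
    rw [hq2] at hqy
    obtain ⟨c', hc'⟩ : ∃ c', S.f p = c' := ⟨_, rfl⟩
    rw [hc'] at hqy hne
    rcases huniq c' p hc' with hp | hp
    · have hxp : S.x p = ((I c' : ℕ) : ℝ) + 1 := by rw [hp, hx]
      have hyp : S.y p = ((I c' : ℕ) : ℝ) + 1 := by rw [hp, hy]
      have hle : (I c : ℕ) ≤ (I c' : ℕ) := by
        have h1 := hq1.1
        rw [hqx, hxp] at h1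
        exact_mod_cast (by linarith : ((I c : ℕ) : ℝ) ≤ ((I c' : ℕ) : ℝ))
      have hlt : (I c : ℕ) < (I c' : ℕ) :=
        lt_of_le_of_ne hle (fun h => hne (hainj c' c h.symm))
      rw [hyp] at hqy
      exact (hmain c c' hlt).1 hqy
    · have hxp : S.x p = ((J c' : ℕ) : ℝ) + 1 := by rw [hp, hx]
      have hyp : S.y p = ((J c' : ℕ) : ℝ) + 1 := by rw [hp, hy]
      have hle : (J c' : ℕ) ≤ (J c : ℕ) := by
        have h1 := hq1.2
        rw [hqx, hxp] at h1
        exact_mod_cast (by linarith : ((J c' : ℕ) : ℝ) ≤ ((J c : ℕ) : ℝ))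
      have hlt : (J c' : ℕ) < (J c : ℕ) :=
        lt_of_le_of_ne hle (fun h => hne (hbinj c' c h))
      rw [hyp] at hqy
      rcases lt_trichotomy ((I c : ℕ)) ((I c' : ℕ)) with h | h | h
      · exact (hmain c c' h).2.1 hlt hqy
      · exact hne (hainj c' c h.symm)
      · exact (hmain c' c h).2.2 hlt hqy
  refine ⟨Y2, ?_, ⟨?_, hcl2, ?_⟩, ?_⟩
  · -- injectivity
    intro c c' h
    have hfl : ∀ d : C, ⌊Y2 d⌋ = zf d := by
      intro d
      have h1 : ((zf d : ℤ) : ℝ) ≤ Y2 d := by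
        have := (hfr0 d).le
        simp only [hY2def]
        linarith
      have h2 : Y2 d < (zf d : ℤ) + 1 := by
        have := hfr1 d
        simp only [hY2def]
        push_cast
        linarith
      exact Int.floor_eq_iff.mpr ⟨h1, h2⟩
    have hz : zf c = zf c' := by rw [← hfl c, ← hfl c', h]
    have hfr_eq : fr c = fr c' := by
      have h1 : ((zf c : ℤ) : ℝ) + fr c = ((zf c' : ℤ) : ℝ) + fr c' := h
      have h2 : ((zf c : ℤ) : ℝ) = ((zf c' : ℤ) : ℝ) := by exact_mod_cast hz
      linarith
    have hnum : ((I c : ℕ) : ℝ) = ((I c' : ℕ) : ℝ) := by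
      simp only [hfrdef] at hfr_eq
      rw [div_eq_div_iff hk2.ne' hk2.ne'] at hfr_eq
      have := mul_right_cancel₀ hk2.ne' hfr_eq
      linarith
    exact hainj c c' (by exact_mod_cast hnum)
  · -- clause 1
    intro c p hne hmem
    exact Set.disjoint_left.mp (hcl2 c p hne) hmem ⟨rfl, left_mem_uIcc⟩
  · -- clause 3
    intro p q hne
    rw [Set.disjoint_left]
    rintro r ⟨hr1, -⟩ ⟨hr2, -⟩
    exact hne (congrArg S.f (S.x_inj (hr1.symm.trans hr2 : S.x p = S.x q)))
  · -- center
    intro c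
    have h1 : sInf (S.y '' {p | S.f p = c}) < Y2 c := by
      rw [hyinf c]; exact hY2lb c
    have h2 : Y2 c < sSup (S.y '' {p | S.f p = c}) := by
      rw [hysup c]; exact hY2ub c
    exact ⟨h1, h2⟩
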